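/- Let 2 ≤ k ≤ q-3 and fix 1 ≤ i ≤ q and a ∈ F_q. For the word u(i,a) ∈ F_q^{q+1} with coordinates 1/(α_j - α_i) for j ≠ i (j ≤ q), a in position i, and 0 in position q+1, the syndrome G_{q+1-k} · u(i,a)^T equals a·c_{q+1-k}(α_i) - c'_{q+1-k}(α_i), where c'_m(t) = (0, 1, 2t, 3t^2, ..., (m-1)t^{m-2})^T. -/
import Mathlib


open Matrix Polynomial

/-- The column `c_m(t)` of the PRS generator matrix: `(1,t,...,t^{m-1})` for `t ∈ F`
(`some a`), and `(0,...,0,1)` for `t = ∞` (`none`). -/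
def PRScol (F : Type*) [Field F] (m : ℕ) : Option F → Fin m → F
  | some a => fun i => a ^ (i : ℕ)
  | none => fun i => if (i : ℕ) = m - 1 then 1 else 0

/-- The generator matrix `G_m` of the projective Reed-Solomon code, with columns
indexed by `Option F = F ∪ {∞}`. -/
def PRSmat (F : Type*) [Field F] (m : ℕ) : Matrix (Fin m) (Option F) F :=
  Matrix.of fun i t => PRScol F m t i

/-- The projective Reed-Solomon code `PRS(m)`: the row span of `G_m`. -/
def PRS (F : Type*) [Field F] (m : ℕ) : Submodule F (Option F → F) :=
  Submodule.span F (Set.range (PRSmat F m))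

/-- Error distance of a word `u` to a set of codewords `C`. -/
noncomputable def errDist {F ι : Type*} [DecidableEq F] [Fintype ι]
    (u : ι → F) (C : Set (ι → F)) : ℕ :=
  sInf {d | ∃ c ∈ C, hammingDist u c = d}

/-- Covering radius of a set of codewords `C`. -/
noncomputable def covRad {F ι : Type*} [DecidableEq F] [Fintype ι]
    (C : Set (ι → F)) : ℕ :=
  sSup {r | ∃ u : ι → F, errDist u C = r}

/-- Minimum distance of a code `C`. -/
noncomputable def minDist {F ι : Type*} [DecidableEq F] [Fintype ι]
    (C : Set (ι → F)) : ℕ :=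
  sInf {d | ∃ x ∈ C, ∃ y ∈ C, x ≠ y ∧ hammingDist x y = d}

/-- The matrix `g_m` associated to a 2×2 matrix `g = [[a,b],[c,d]]`: its `(i,j)` entry
(0-indexed) is the coefficient of `X^j` in `(a+bX)^{m-1-i} (c+dX)^i`. -/
noncomputable def glift (F : Type*) [Field F] (m : ℕ) (g : Matrix (Fin 2) (Fin 2) F) :
    Matrix (Fin m) (Fin m) F :=
  Matrix.of fun i j =>
    ((Polynomial.C (g 0 0) + Polynomial.C (g 0 1) * Polynomial.X) ^ (m - 1 - (i : ℕ)) *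
      (Polynomial.C (g 1 0) + Polynomial.C (g 1 1) * Polynomial.X) ^ (i : ℕ)).coeff (j : ℕ)

/-- The Möbius action of `g = [[a,b],[c,d]]` on `F ∪ {∞}`: `t ↦ (c+dt)/(a+bt)`. -/
def mobius {F : Type*} [Field F] [DecidableEq F]
    (g : Matrix (Fin 2) (Fin 2) F) : Option F → Option F
  | some x =>
      if g 0 0 + g 0 1 * x = 0 then none
      else some ((g 1 0 + g 1 1 * x) / (g 0 0 + g 0 1 * x))
  | none => if g 0 1 = 0 then none else some (g 1 1 / g 0 1)

/-- The point `N_m = (0,...,0,1,0)` (1 in position `m-1` of `1..m`, i.e. index `m-2`). -/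
def Nvec (F : Type*) [Field F] (m : ℕ) : Fin m → F :=
  fun i => if (i : ℕ) = m - 2 then 1 else 0

-- auxiliary lemmas

lemma sum_pow_mul_inv (F : Type*) [Field F] [Fintype F] [DecidableEq F]
    (hq : 5 ≤ Fintype.card F) (n : ℕ) (hn : n ≤ Fintype.card F - 2) :
    ∑ y ∈ Finset.univ.erase (0:F), y ^ n * y⁻¹ = if n = 1 then -1 else 0 := by
  match n with
  | 0 =>
    rw [if_neg (by norm_num)]
    simp only [pow_zero, one_mul]
    rw [Finset.sum_erase _ (by simp)]
    rw [Fintype.sum_equiv (Equiv.inv F) _ (fun y => y) (fun y => by simp)]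
    have := FiniteField.sum_pow_lt_card_sub_one (K := F) 1 (by omega)
    simpa using this
  | 1 =>
    rw [if_pos rfl]
    rw [Finset.sum_congr rfl (fun y hy => ?_)]
    · rw [Finset.sum_const, Finset.card_erase_of_mem (Finset.mem_univ _),
        Finset.card_univ, nsmul_eq_mul, mul_one]
      rw [Nat.cast_sub (by omega), FiniteField.cast_card_eq_zero, Nat.cast_one, zero_sub]
    · rw [pow_one, mul_inv_cancel₀ (by simpa using (Finset.mem_erase.mp hy).1)]
  | (m+2) =>
    rw [if_neg (by omega)]
    have : ∀ y ∈ Finset.univ.erase (0:F), y ^ (m+2) * y⁻¹ = y ^ (m+1) := by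
      intro y hy
      have h0 : y ≠ 0 := by simpa using (Finset.mem_erase.mp hy).1
      rw [pow_succ, mul_assoc, mul_inv_cancel₀ h0, mul_one]
    rw [Finset.sum_congr rfl this, Finset.sum_erase _ (by simp)]
    exact FiniteField.sum_pow_lt_card_sub_one (K := F) (m+1) (by omega)

lemma key_sum (F : Type*) [Field F] [Fintype F] [DecidableEq F]
    (hq : 5 ≤ Fintype.card F) (b : F) (n : ℕ) (hn : n ≤ Fintype.card F - 2) :
    ∑ x ∈ Finset.univ.erase b, x ^ n * (x - b)⁻¹ = -((n : F) * b ^ (n - 1)) := by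
  have hbij : ∑ x ∈ Finset.univ.erase b, x ^ n * (x - b)⁻¹
      = ∑ y ∈ Finset.univ.erase 0, (y + b) ^ n * y⁻¹ := by
    refine (Finset.sum_nbij' (fun x => x - b) (fun y => y + b) ?_ ?_ ?_ ?_ ?_).symm.symm
    · intro x hx
      simp only [Finset.mem_erase, Finset.mem_univ, and_true] at hx ⊢
      exact sub_ne_zero.mpr hx
    · intro y hy
      simp only [Finset.mem_erase, Finset.mem_univ, and_true] at hy ⊢
      intro h; exact hy (by linear_combination h)
    · intro x _; ring
    · intro y _; ring
    · intro x _; rw [sub_add_cancel]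
  rw [hbij]
  have expand : ∀ y ∈ Finset.univ.erase (0:F), (y + b) ^ n * y⁻¹
      = ∑ l ∈ Finset.range (n+1), (y ^ l * y⁻¹) * (b ^ (n - l) * (n.choose l : F)) := by
    intro y _
    rw [add_pow, Finset.sum_mul]
    exact Finset.sum_congr rfl fun l _ => by ring
  rw [Finset.sum_congr rfl expand, Finset.sum_comm]
  have inner : ∀ l ∈ Finset.range (n+1),
      ∑ y ∈ Finset.univ.erase (0:F), (y ^ l * y⁻¹) * (b ^ (n - l) * (n.choose l : F))
      = if l = 1 then -(b ^ (n - 1) * (n.choose 1 : F)) else 0 := by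
    intro l hl
    rw [← Finset.sum_mul, sum_pow_mul_inv F hq l (by
      simp only [Finset.mem_range] at hl; omega), ite_mul, zero_mul, neg_one_mul]
    split_ifs with h
    · subst h; rfl
    · rfl
  rw [Finset.sum_congr rfl inner, Finset.sum_ite_eq' (Finset.range (n+1)) 1
    (fun l => -(b ^ (n - 1) * (n.choose 1 : F)))]
  rcases Nat.eq_zero_or_pos n with h | h
  · subst h; simp
  · rw [if_pos (Finset.mem_range.mpr (by omega)), Nat.choose_one_right]
    ring


/-- Syndrome of the word $u(i,a)$ with coordinates $1/(α_j - α_i)$ for $j ≠ i$, $a$ in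
position $i$ and $0$ at $∞$: it equals $a c_{q+1-k}(α_i) - c'_{q+1-k}(α_i)$. -/
theorem stmt16 (F : Type*) [Field F] [Fintype F] [DecidableEq F] (k : ℕ)
    (h2 : 2 ≤ k) (h3 : k ≤ Fintype.card F - 3) (b a : F) :
    (PRSmat F (Fintype.card F + 1 - k)).mulVec
        (fun t : Option F => match t with
          | none => 0
          | some x => if x = b then a else (x - b)⁻¹) =
      a • PRScol F (Fintype.card F + 1 - k) (some b) -
        fun j : Fin (Fintype.card F + 1 - k) => ((j : ℕ) : F) * b ^ ((j : ℕ) - 1) := by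
  have hq : 5 ≤ Fintype.card F := by omega
  funext j
  have hj : (j : ℕ) ≤ Fintype.card F - 2 := by have := j.isLt; omega
  simp only [Matrix.mulVec, dotProduct, Pi.sub_apply, Pi.smul_apply, smul_eq_mul]
  rw [Fintype.sum_option]
  have hnone : PRSmat F (Fintype.card F + 1 - k) j none *
      (match (none : Option F) with
        | none => 0
        | some x => if x = b then a else (x - b)⁻¹) = 0 := by
    simp
  rw [hnone, zero_add]
  have hsplit := Finset.add_sum_erase Finset.univ
    (fun x : F => PRSmat F (Fintype.card F + 1 - k) j (some x) *
      (if x = b then a else (x - b)⁻¹)) (Finset.mem_univ b)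
  rw [Finset.sum_congr rfl (fun x (_ : x ∈ Finset.univ) =>
    show PRSmat F (Fintype.card F + 1 - k) j (some x) *
        (match (some x : Option F) with
          | none => (0:F)
          | some x => if x = b then a else (x - b)⁻¹)
      = PRSmat F (Fintype.card F + 1 - k) j (some x) * (if x = b then a else (x - b)⁻¹)
      from rfl), ← hsplit]
  simp only [if_pos rfl]
  have hmat : ∀ x : F, PRSmat F (Fintype.card F + 1 - k) j (some x) = x ^ (j:ℕ) := fun x => rfl
  have hcol : PRScol F (Fintype.card F + 1 - k) (some b) j = b ^ (j:ℕ) := rfl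
  rw [hcol]
  have herase : ∑ x ∈ Finset.univ.erase b,
      PRSmat F (Fintype.card F + 1 - k) j (some x) * (if x = b then a else (x - b)⁻¹)
      = ∑ x ∈ Finset.univ.erase b, x ^ (j:ℕ) * (x - b)⁻¹ := by
    refine Finset.sum_congr rfl fun x hx => ?_
    rw [hmat, if_neg (Finset.mem_erase.mp hx).1]
  rw [herase, hmat, key_sum F hq b (j:ℕ) hj, if_true]
  ring
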